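/- Let A ⊆ B be a pure extension of R-modules, U ⊆ A a submodule such that A/U is pure-essential in B/U. Then A is pure-essential in B. -/

import Mathlib

open IsLocalRing Pointwise

universe u v

variable (R : Type u) [CommRing R]

/-- A submodule `A ⊆ B` is pure if for every module `X`, `X ⊗ A → X ⊗ B` is injective. -/
def IsPureSubmodule {B : Type v} [AddCommGroup B] [Module R B] (A : Submodule R B) : Prop :=
  ∀ (X : Type v) [AddCommGroup X] [Module R X],
    Function.Injective (LinearMap.lTensor X A.subtype)

/-- A linear map is a pure monomorphism if it is injective with pure range. -/
def IsPureMono {M N : Type v} [AddCommGroup M] [Module R M]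
    [AddCommGroup N] [Module R N] (f : M →ₗ[R] N) : Prop :=
  Function.Injective f ∧ IsPureSubmodule R (LinearMap.range f)

/-- A submodule `A ⊆ B` is pure-essential if it is pure and for every `X ⊆ B` with
`X ⊓ A = ⊥` and `(X ⊕ A)/X` pure in `B/X`, one has `X = ⊥`. -/
def IsPureEssential {B : Type v} [AddCommGroup B] [Module R B] (A : Submodule R B) : Prop :=
  IsPureSubmodule R A ∧
    ∀ X : Submodule R B, X ⊓ A = ⊥ → IsPureSubmodule R (A.map X.mkQ) → X = ⊥

/-- An injective linear map is a pure-essential embedding if its range is pure-essential. -/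
def IsPureEssentialEmb {M N : Type v} [AddCommGroup M] [Module R M]
    [AddCommGroup N] [Module R N] (f : M →ₗ[R] N) : Prop :=
  Function.Injective f ∧ IsPureEssential R (LinearMap.range f)

/-- `A ⊆ B` is strictly pure-essential if `A` is pure in `B` and every homomorphism out of `B`
restricting to a pure monomorphism on `A` is itself a pure monomorphism. -/
def IsStrictlyPureEssential {B : Type v} [AddCommGroup B] [Module R B]
    (A : Submodule R B) : Prop :=
  IsPureSubmodule R A ∧
    ∀ (Y : Type v) [AddCommGroup Y] [Module R Y] (f : B →ₗ[R] Y),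
      IsPureMono R (f ∘ₗ A.subtype) → IsPureMono R f

/-- `B` is an injective hull of `A` (via some embedding with essential range). -/
def IsInjectiveHull (A : Type v) (B : Type v) [AddCommGroup A] [Module R A]
    [AddCommGroup B] [Module R B] : Prop :=
  Module.Injective R B ∧ ∃ f : A →ₗ[R] B, Function.Injective f ∧
    ∀ X : Submodule R B, X ≠ ⊥ → X ⊓ LinearMap.range f ≠ ⊥

/-- The Matlis evaluation map `M → Hom(Hom(M,E),E)`. -/
noncomputable def matlisEval (E M : Type v) [AddCommGroup E] [Module R E]
    [AddCommGroup M] [Module R M] : M →ₗ[R] ((M →ₗ[R] E) →ₗ[R] E) :=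
  LinearMap.applyₗ

/-- `M` is Matlis-reflexive (w.r.t. `E`). -/
def IsMatlisReflexive (E M : Type v) [AddCommGroup E] [Module R E]
    [AddCommGroup M] [Module R M] : Prop :=
  Function.Bijective (matlisEval R E M)

/-- `M` is quasi-reflexive: the canonical map `M → M°°` is a pure-essential embedding. -/
def IsQuasiReflexive (E M : Type v) [AddCommGroup E] [Module R E]
    [AddCommGroup M] [Module R M] : Prop :=
  IsPureEssentialEmb R (matlisEval R E M)

/-- The largest radical-full submodule `P(M)` (sum of all `V` with `V = m V`). -/
def radicalFullPart [IsLocalRing R] (M : Type v) [AddCommGroup M] [Module R M] :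
    Submodule R M :=
  sSup {V : Submodule R M | V = maximalIdeal R • V}

/-- The largest divisible submodule `D(M)` (w.r.t. non-zerodivisors). -/
def divisiblePart (M : Type v) [AddCommGroup M] [Module R M] : Submodule R M :=
  sSup {V : Submodule R M | ∀ r ∈ nonZeroDivisors R, V ≤ r • V}


lemma isPureSubmodule_map_equiv {B B' : Type v} [AddCommGroup B] [Module R B]
    [AddCommGroup B'] [Module R B'] (e : B ≃ₗ[R] B') (A : Submodule R B)
    (h : IsPureSubmodule R A) : IsPureSubmodule R (A.map (e : B →ₗ[R] B')) := by
  intro X _ _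
  have key : (A.map (e : B →ₗ[R] B')).subtype ∘ₗ ((e.submoduleMap A : A ≃ₗ[R] _) : A →ₗ[R] _)
      = (e : B →ₗ[R] B') ∘ₗ A.subtype := by ext x; rfl
  have h1 : Function.Injective (LinearMap.lTensor X
      ((A.map (e : B →ₗ[R] B')).subtype ∘ₗ ((e.submoduleMap A : A ≃ₗ[R] _) : A →ₗ[R] _))) := by
    rw [key, LinearMap.lTensor_comp]
    have he : Function.Injective (LinearMap.lTensor X (e : B →ₗ[R] B')) := by
      rw [← LinearEquiv.coe_lTensor]
      exact (LinearEquiv.lTensor X e).injective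
    exact he.comp (h X)
  rw [LinearMap.lTensor_comp, LinearMap.coe_comp] at h1
  exact h1.of_comp_right
    (LinearMap.lTensor_surjective X (e.submoduleMap A).surjective)

lemma isPureSubmodule_map_mkQ {B : Type v} [AddCommGroup B] [Module R B]
    {A U : Submodule R B} (hUA : U ≤ A) (h : IsPureSubmodule R A) :
    IsPureSubmodule R (A.map U.mkQ) := by
  intro X _ _
  set U' : Submodule R A := U.comap A.subtype with hU'
  set π : A →ₗ[R] A.map U.mkQ :=
    (U.mkQ ∘ₗ A.subtype).codRestrict _ (fun a => Submodule.mem_map_of_mem a.2) with hπ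
  have hπsurj : Function.Surjective π := by
    rintro ⟨y, b, hb, rfl⟩
    exact ⟨⟨b, hb⟩, Subtype.ext rfl⟩
  have hcomm : (A.map U.mkQ).subtype ∘ₗ π = U.mkQ ∘ₗ A.subtype := rfl
  have hrange : LinearMap.range (A.subtype ∘ₗ U'.subtype) = U := by
    apply le_antisymm
    · rintro _ ⟨⟨u, hu⟩, rfl⟩
      exact hu
    · intro u hu
      exact ⟨⟨⟨u, hUA hu⟩, hu⟩, rfl⟩
  have hexactB : Function.Exact (A.subtype ∘ₗ U'.subtype) U.mkQ := by
    rw [LinearMap.exact_iff, Submodule.ker_mkQ, hrange]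
  have hπU : π ∘ₗ U'.subtype = 0 := by
    ext ⟨u, hu⟩
    simpa [π, hU', Submodule.Quotient.mk_eq_zero] using hu
  rw [← LinearMap.ker_eq_bot, eq_bot_iff]
  intro t ht
  rw [LinearMap.mem_ker] at ht
  obtain ⟨s, rfl⟩ := LinearMap.lTensor_surjective X hπsurj t
  have h0 : LinearMap.lTensor X U.mkQ (LinearMap.lTensor X A.subtype s) = 0 := by
    rw [← LinearMap.comp_apply, ← LinearMap.lTensor_comp, ← hcomm,
      LinearMap.lTensor_comp, LinearMap.comp_apply, ht]
  obtain ⟨u, hu⟩ := (lTensor_exact X hexactB (Submodule.mkQ_surjective U)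
    (LinearMap.lTensor X A.subtype s)).mp h0
  rw [LinearMap.lTensor_comp, LinearMap.comp_apply] at hu
  have hsu : LinearMap.lTensor X U'.subtype u = s := h X hu
  rw [← hsu, ← LinearMap.comp_apply, ← LinearMap.lTensor_comp, hπU,
    LinearMap.lTensor_zero, LinearMap.zero_apply]
  exact Submodule.zero_mem ⊥

theorem stmt_1 {B : Type u} [AddCommGroup B] [Module R B]
    (A U : Submodule R B) (hUA : U ≤ A)
    (hpure : IsPureSubmodule R A)
    (hquot : IsPureEssential R (A.map U.mkQ)) :
    IsPureEssential R A := by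
  refine ⟨hpure, fun X hXA hXpure => ?_⟩
  set X' : Submodule R (B ⧸ U) := X.map U.mkQ with hX'
  -- X' ∩ (A/U) = 0
  have hXU : X' ⊓ A.map U.mkQ = ⊥ := by
    rw [eq_bot_iff]
    rintro y ⟨hy1, hy2⟩
    obtain ⟨x, hx, rfl⟩ := hy1
    obtain ⟨a, ha, hax⟩ := hy2
    have hxa : a - x ∈ U := (Submodule.Quotient.eq U).mp hax
    have hxA : x ∈ A := by
      have : x = a - (a - x) := (sub_sub_cancel a x).symm
      rw [this]
      exact sub_mem ha (hUA hxa)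
    have hx0 : x = 0 := by
      have : x ∈ X ⊓ A := ⟨hx, hxA⟩
      rwa [hXA, Submodule.mem_bot] at this
    simp [hx0]
  -- the equivalence (B/X)/(U/X-image) ≃ (B/U)/X'
  set T : Submodule R B := U ⊔ X with hT
  have hUT : U ≤ T := le_sup_left
  have hXT : X ≤ T := le_sup_right
  have hTU : T.map U.mkQ = X' := by
    rw [hT, Submodule.map_sup, Submodule.mkQ_map_self, bot_sup_eq]
  have hTX : T.map X.mkQ = U.map X.mkQ := by
    rw [hT, Submodule.map_sup, Submodule.mkQ_map_self, sup_bot_eq]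
  set e₁ : ((B ⧸ U) ⧸ T.map U.mkQ) ≃ₗ[R] B ⧸ T :=
    Submodule.quotientQuotientEquivQuotient U T hUT with he₁
  set e₂ : ((B ⧸ X) ⧸ T.map X.mkQ) ≃ₗ[R] B ⧸ T :=
    Submodule.quotientQuotientEquivQuotient X T hXT with he₂
  set f : ((B ⧸ X) ⧸ U.map X.mkQ) ≃ₗ[R] ((B ⧸ U) ⧸ X') :=
    (Submodule.quotEquivOfEq _ _ hTX.symm).trans (e₂.trans (e₁.symm.trans
      (Submodule.quotEquivOfEq _ _ hTU))) with hf
  have hfb : ∀ b : B, f ((U.map X.mkQ).mkQ (X.mkQ b)) = X'.mkQ (U.mkQ b) := by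
    intro b
    have h1 : e₂ ((T.map X.mkQ).mkQ (X.mkQ b)) = T.mkQ b :=
      Submodule.quotientQuotientEquivQuotientAux_mk_mk X T hXT b
    have h2 : e₁ ((T.map U.mkQ).mkQ (U.mkQ b)) = T.mkQ b :=
      Submodule.quotientQuotientEquivQuotientAux_mk_mk U T hUT b
    have h3 : e₁.symm (T.mkQ b) = (T.map U.mkQ).mkQ (U.mkQ b) := by
      rw [LinearEquiv.symm_apply_eq, h2]
    simp only [hf, LinearEquiv.trans_apply, Submodule.mkQ_apply] at h1 h3 ⊢
    rw [Submodule.quotEquivOfEq_mk, h1, h3, Submodule.quotEquivOfEq_mk]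
  -- transport purity
  have hUX : U.map X.mkQ ≤ A.map X.mkQ := Submodule.map_mono hUA
  have hQpure : IsPureSubmodule R ((A.map X.mkQ).map (U.map X.mkQ).mkQ) :=
    isPureSubmodule_map_mkQ R hUX hXpure
  have hmap : ((A.map X.mkQ).map (U.map X.mkQ).mkQ).map (f : _ →ₗ[R] _)
      = (A.map U.mkQ).map X'.mkQ := by
    ext y
    simp only [Submodule.mem_map]
    constructor
    · rintro ⟨_, ⟨_, ⟨a, ha, rfl⟩, rfl⟩, rfl⟩
      exact ⟨U.mkQ a, ⟨a, ha, rfl⟩, (hfb a).symm⟩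
    · rintro ⟨_, ⟨a, ha, rfl⟩, rfl⟩
      exact ⟨(U.map X.mkQ).mkQ (X.mkQ a), ⟨X.mkQ a, ⟨a, ha, rfl⟩, rfl⟩, hfb a⟩
  have hPpure : IsPureSubmodule R ((A.map U.mkQ).map X'.mkQ) := by
    have := isPureSubmodule_map_equiv R f _ hQpure
    rwa [hmap] at this
  have hX'bot : X' = ⊥ := hquot.2 X' hXU hPpure
  have hXU' : X ≤ U := by
    intro x hx
    have : U.mkQ x ∈ X' := Submodule.mem_map_of_mem hx
    rw [hX'bot, Submodule.mem_bot] at this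
    rwa [Submodule.mkQ_apply, Submodule.Quotient.mk_eq_zero] at this
  rw [← hXA]
  exact left_eq_inf.mpr (hXU'.trans hUA)
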